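/- Let m ≥ 3, let h be a symmetric invertible real m×m matrix, k = h², and define R(Ω) = 2·h·Ω·h for skew-symmetric Ω. If h̃ is any real m×m matrix satisfying h̃·k⁻¹·R(Ω) = 2·Ω·h̃ for all skew-symmetric Ω, then h̃ = λ·h for some real λ. -/

import Mathlib

open Matrix

lemma exists_third {m : ℕ} (hm : 3 ≤ m) (p i : Fin m) : ∃ j : Fin m, j ≠ p ∧ j ≠ i := by
  by_contra hc
  push_neg at hc
  have hsub : (Finset.univ : Finset (Fin m)) ⊆ {p, i} := by
    intro j _
    simp only [Finset.mem_insert, Finset.mem_singleton]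
    rcases eq_or_ne j p with hj | hj
    · exact Or.inl hj
    · exact Or.inr (hc j hj)
  have hcard := Finset.card_le_card hsub
  have h2 : ({p, i} : Finset (Fin m)).card ≤ 2 := by
    calc ({p, i} : Finset (Fin m)).card ≤ ({i} : Finset (Fin m)).card + 1 :=
          Finset.card_insert_le _ _
      _ = 2 := by simp
  simp only [Finset.card_univ, Fintype.card_fin] at hcard
  omega

lemma commute_skew_scalar {m : ℕ} (hm : 3 ≤ m) (A : Matrix (Fin m) (Fin m) ℝ)
    (hA : ∀ Ω : Matrix (Fin m) (Fin m) ℝ, Ωᵀ = -Ω → A * Ω = Ω * A) :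
    ∃ l : ℝ, A = l • (1 : Matrix (Fin m) (Fin m) ℝ) := by
  have key : ∀ i j : Fin m, i ≠ j →
      A * (single i j (1:ℝ) - single j i (1:ℝ)) =
      (single i j (1:ℝ) - single j i (1:ℝ)) * A := by
    intro i j hij
    apply hA
    ext a b
    simp [Matrix.single, Matrix.transpose_apply, Matrix.sub_apply,
      Matrix.neg_apply, Matrix.of_apply, and_comm]
  -- off-diagonal entries are zero
  have offd : ∀ p i : Fin m, p ≠ i → A p i = 0 := by
    intro p i hpi
    obtain ⟨j, hjp, hji⟩ := exists_third hm p i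
    have hij : i ≠ j := fun e => hji e.symm
    have := congrFun (congrFun (key i j hij) p) j
    simp [Matrix.mul_sub, Matrix.sub_mul, Matrix.sub_apply, hpi, hij, hji, hjp,
      hji.symm, hij.symm, hjp.symm, hpi.symm] at this
    exact this
  -- diagonal entries are all equal
  have diag : ∀ i j : Fin m, i ≠ j → A i i = A j j := by
    intro i j hij
    have := congrFun (congrFun (key i j hij) i) j
    simp [Matrix.mul_sub, Matrix.sub_mul, Matrix.sub_apply, hij, hij.symm] at this
    exact this
  have hz : 0 < m := by omega
  set z : Fin m := ⟨0, hz⟩ with hzdef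
  refine ⟨A z z, ?_⟩
  ext p q
  by_cases hpq : p = q
  · subst hpq
    rcases eq_or_ne p z with hp | hp
    · subst hp; simp
    · rw [diag p z hp]; simp
  · rw [offd p q hpq]
    simp [Matrix.one_apply_ne hpq]

theorem stmt_8 {m : ℕ} (hm : 3 ≤ m) (h : Matrix (Fin m) (Fin m) ℝ)
    (hsym : h.IsSymm) (hinv : IsUnit h)
    (k : Matrix (Fin m) (Fin m) ℝ) (hk : k = h ^ 2)
    (R : Matrix (Fin m) (Fin m) ℝ → Matrix (Fin m) (Fin m) ℝ)
    (hR : ∀ Ω, R Ω = (2 : ℝ) • (h * Ω * h))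
    (htilde : Matrix (Fin m) (Fin m) ℝ)
    (hsol : ∀ Ω : Matrix (Fin m) (Fin m) ℝ, Ωᵀ = -Ω →
      htilde * k⁻¹ * R Ω = (2 : ℝ) • (Ω * htilde)) :
    ∃ l : ℝ, htilde = l • h := by
  have hdet : IsUnit h.det := (Matrix.isUnit_iff_isUnit_det h).mp hinv
  have hih : h⁻¹ * h = 1 := Matrix.nonsing_inv_mul h hdet
  have hhi : h * h⁻¹ = 1 := Matrix.mul_nonsing_inv h hdet
  set A := htilde * h⁻¹ with hAdef
  have hAcomm : ∀ Ω : Matrix (Fin m) (Fin m) ℝ, Ωᵀ = -Ω → A * Ω = Ω * A := by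
    intro Ω hΩ
    have hs := hsol Ω hΩ
    rw [hR, hk, pow_two, Matrix.mul_inv_rev] at hs
    have hL : htilde * (h⁻¹ * h⁻¹) * ((2:ℝ) • (h * Ω * h)) =
        (2:ℝ) • (A * Ω * h) := by
      rw [mul_smul_comm]
      congr 1
      rw [hAdef]
      simp only [mul_assoc]
      rw [← mul_assoc h⁻¹ h (Ω * h), hih, one_mul]
    rw [hL] at hs
    have h2 : (A * Ω * h) = (Ω * htilde) := by
      have := smul_right_injective (Matrix (Fin m) (Fin m) ℝ) (two_ne_zero (α := ℝ)) hs
      exact this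
    have := congrArg (fun X => X * h⁻¹) h2
    rw [mul_assoc, hhi, mul_one] at this
    rw [this, hAdef, mul_assoc]
  obtain ⟨l, hl⟩ := commute_skew_scalar hm A hAcomm
  refine ⟨l, ?_⟩
  have : htilde = A * h := by rw [hAdef, mul_assoc, hih, mul_one]
  rw [this, hl, smul_mul_assoc, one_mul]
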